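/- arXiv:1708.02848 — 2 statements merged into one kernel-verified Lean document; each statement's English description precedes it below -/
import Mathlib

section
/- Let H be a complex inner product space, f ∈ H nonzero, and e_1,…,e_n orthonormal in H. If ‖f − f'‖ ≤ δ with ‖f'‖ ≥ c₀ > 0, then |I(f) − I(f')| ≤ 2δ/c₀, where I(g) := sqrt(∑_j |⟨g, e_j⟩|²)/‖g‖. -/
/-- The "projection amplitude" `P g = sqrt(∑_j ‖⟨g, e_j⟩‖²)` is at most `‖g‖` (Bessel). -/
lemma proj_amp_le_norm {H : Type*} [NormedAddCommGroup H] [InnerProductSpace ℂ H]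
    (n : ℕ) (e : Fin n → H) (he : Orthonormal ℂ e) (g : H) :
    Real.sqrt (∑ j, ‖(inner ℂ g (e j) : ℂ)‖ ^ 2) ≤ ‖g‖ := by
  have h : ∑ j, ‖(inner ℂ g (e j) : ℂ)‖ ^ 2 ≤ ‖g‖ ^ 2 := by
    have := he.sum_inner_products_le (s := Finset.univ) g
    simpa [norm_inner_symm] using this
  calc Real.sqrt (∑ j, ‖(inner ℂ g (e j) : ℂ)‖ ^ 2) ≤ Real.sqrt (‖g‖ ^ 2) :=
        Real.sqrt_le_sqrt h
    _ = ‖g‖ := by rw [Real.sqrt_sq (norm_nonneg g)]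

/-- Robustness of the location indicator: if `‖f − f'‖ ≤ δ` and `‖f'‖ ≥ c₀ > 0`, then
`|I(f) − I(f')| ≤ 2δ/c₀`, where `I(g) = sqrt(∑_j |⟨g, e_j⟩|²)/‖g‖`. -/
theorem location_indicator_robustness
    {H : Type*} [NormedAddCommGroup H] [InnerProductSpace ℂ H]
    (n : ℕ) (e : Fin n → H) (he : Orthonormal ℂ e)
    (f f' : H) (hf : f ≠ 0) (c₀ δ : ℝ) (hc₀ : 0 < c₀)
    (hδ : ‖f - f'‖ ≤ δ) (hf' : c₀ ≤ ‖f'‖) :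
    |Real.sqrt (∑ j, ‖(inner ℂ f (e j) : ℂ)‖ ^ 2) / ‖f‖ -
      Real.sqrt (∑ j, ‖(inner ℂ f' (e j) : ℂ)‖ ^ 2) / ‖f'‖| ≤ 2 * δ / c₀ := by
  set a := Real.sqrt (∑ j, ‖(inner ℂ f (e j) : ℂ)‖ ^ 2) with ha
  set b := Real.sqrt (∑ j, ‖(inner ℂ f' (e j) : ℂ)‖ ^ 2) with hb
  set x := ‖f‖ with hxdef
  set y := ‖f'‖ with hydef
  have hx : 0 < x := norm_pos_iff.mpr hf
  have hy : 0 < y := lt_of_lt_of_le hc₀ hf'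
  have hδ0 : 0 ≤ δ := le_trans (norm_nonneg _) hδ
  have h1 : a ≤ x := proj_amp_le_norm n e he f
  have h2 : b ≤ y := proj_amp_le_norm n e he f'
  have h3 : 0 ≤ a := Real.sqrt_nonneg _
  have h4 : 0 ≤ b := Real.sqrt_nonneg _
  -- |x - y| ≤ δ
  have hxy : |x - y| ≤ δ := le_trans (abs_norm_sub_norm_le f f') hδ
  have hxy1 : x - y ≤ δ := le_trans (le_abs_self _) hxy
  have hxy2 : y - x ≤ δ := by linarith [(abs_le.mp hxy).1]
  -- |a - b| ≤ δ via the Euclidean space picture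
  have hab : |a - b| ≤ δ := by
    set v : H → EuclideanSpace ℂ (Fin n) := fun g => WithLp.toLp 2 (fun j => inner ℂ g (e j)) with hv
    have hva : a = ‖v f‖ := by rw [EuclideanSpace.norm_eq]
    have hvb : b = ‖v f'‖ := by rw [EuclideanSpace.norm_eq]
    have hsub : v f - v f' = v (f - f') := by
      ext j
      simp [hv, inner_sub_left]
    calc |a - b| = |‖v f‖ - ‖v f'‖| := by rw [hva, hvb]
      _ ≤ ‖v f - v f'‖ := abs_norm_sub_norm_le _ _
      _ = ‖v (f - f')‖ := by rw [hsub]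
      _ = Real.sqrt (∑ j, ‖(inner ℂ (f - f') (e j) : ℂ)‖ ^ 2) := by
          rw [EuclideanSpace.norm_eq]
      _ ≤ ‖f - f'‖ := proj_amp_le_norm n e he (f - f')
      _ ≤ δ := hδ
  have hab1 : a - b ≤ δ := le_trans (le_abs_self _) hab
  have hab2 : b - a ≤ δ := by linarith [(abs_le.mp hab).1]
  have key : |a / x - b / y| ≤ 2 * δ / y := by
    rw [abs_le]
    constructor
    · have : b / y - a / x ≤ 2 * δ / y := by
        rw [div_sub_div b a hy.ne' hx.ne', div_le_div_iff₀ (mul_pos hy hx) hy]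
        nlinarith [mul_nonneg hy.le (mul_nonneg (by linarith : (0:ℝ) ≤ δ - (b - a)) hx.le),
          mul_nonneg hy.le (mul_nonneg (by linarith : (0:ℝ) ≤ x - a) hδ0),
          mul_nonneg hy.le (mul_nonneg h3 (by linarith : (0:ℝ) ≤ δ - (x - y)))]
      linarith
    · rw [div_sub_div a b hx.ne' hy.ne', div_le_div_iff₀ (mul_pos hx hy) hy]
      nlinarith [mul_nonneg hy.le (mul_nonneg (by linarith : (0:ℝ) ≤ δ - (a - b)) hx.le),
        mul_nonneg hy.le (mul_nonneg (by linarith : (0:ℝ) ≤ x - a) hδ0),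
        mul_nonneg hy.le (mul_nonneg h3 (by linarith : (0:ℝ) ≤ δ - (y - x)))]
  calc |a / x - b / y| ≤ 2 * δ / y := key
    _ ≤ 2 * δ / c₀ := by gcongr
end

section
/- Let p ∈ ℝ³ and for z ≠ 0 define ẑ = z/|z|. As |z| → ∞, uniformly for x, y in a bounded set, ∇_x Φ_k(x+z, y) × p = (e^{ik|z| − ik ẑ·y}/(4π|z|)) · ik e^{ik x·ẑ} (ẑ × p) + O(|z|^{−2}). -/
open Matrix

noncomputable def Phi (k : ℝ) (x y : EuclideanSpace ℝ (Fin 3)) : ℂ :=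
  Complex.exp (Complex.I * k * ‖x - y‖) / (4 * Real.pi * ‖x - y‖)

noncomputable def gradPhi (k : ℝ) (x y : EuclideanSpace ℝ (Fin 3)) : Fin 3 → ℂ :=
  fun i => fderiv ℝ (fun w => Phi k w y) x (EuclideanSpace.single i 1)

/-- Complexification of a real vector in `ℝ³`. -/
def toC (v : EuclideanSpace ℝ (Fin 3)) : Fin 3 → ℂ := fun i => (v i : ℂ)

/- ### Auxiliary lemmas -/

lemma norm_exp_I_mul (t : ℝ) : ‖Complex.exp (Complex.I * t)‖ = 1 := by
  rw [Complex.norm_exp]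
  simp

lemma norm_exp_I_sub (a b : ℝ) :
    ‖Complex.exp (Complex.I * a) - Complex.exp (Complex.I * b)‖ ≤ |a - b| := by
  have h : ∀ t : ℝ, HasDerivAt (fun s : ℝ => Complex.exp (Complex.I * s))
      (Complex.exp (Complex.I * t) * Complex.I) t := by
    intro t
    have h1 : HasDerivAt (fun s : ℝ => (s : ℂ)) 1 t := Complex.ofRealCLM.hasDerivAt
    simpa using (h1.const_mul Complex.I).cexp
  have := Convex.norm_image_sub_le_of_norm_hasDerivWithin_le
    (f := fun s : ℝ => Complex.exp (Complex.I * s))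
    (f' := fun t => Complex.exp (Complex.I * t) * Complex.I) (C := 1) (s := Set.univ)
    (fun t _ => (h t).hasDerivWithinAt)
    (fun t _ => by rw [norm_mul, norm_exp_I_mul]; simp) convex_univ (Set.mem_univ b) (Set.mem_univ a)
  simpa [Real.norm_eq_abs] using this

lemma coord_le_norm (v : EuclideanSpace ℝ (Fin 3)) (i : Fin 3) : |v i| ≤ ‖v‖ := by
  rw [EuclideanSpace.norm_eq, ← Real.sqrt_sq (abs_nonneg (v i))]
  apply Real.sqrt_le_sqrt
  calc |v i| ^ 2 = ‖v i‖ ^ 2 := by rw [Real.norm_eq_abs]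
    _ ≤ ∑ j, ‖v j‖ ^ 2 :=
      Finset.single_le_sum (f := fun j => ‖v j‖ ^ 2) (fun j _ => sq_nonneg _) (Finset.mem_univ i)

lemma hasFDerivAt_norm3 (x : EuclideanSpace ℝ (Fin 3)) (hx : x ≠ 0) :
    HasFDerivAt (fun w : EuclideanSpace ℝ (Fin 3) => ‖w‖) ((‖x‖)⁻¹ • innerSL ℝ x) x := by
  have h1 : HasFDerivAt (fun w : EuclideanSpace ℝ (Fin 3) => ‖w‖ ^ 2) (2 • innerSL ℝ x) x :=
    (hasStrictFDerivAt_norm_sq x).hasFDerivAt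
  have h2 := h1.sqrt (pow_ne_zero 2 (norm_ne_zero_iff.mpr hx))
  have heq : (fun w : EuclideanSpace ℝ (Fin 3) => Real.sqrt (‖w‖ ^ 2)) = fun w => ‖w‖ :=
    funext fun w => Real.sqrt_sq (norm_nonneg w)
  rw [heq] at h2
  have : Real.sqrt (‖x‖ ^ 2) = ‖x‖ := Real.sqrt_sq (norm_nonneg x)
  have e : (‖x‖)⁻¹ • innerSL ℝ x = ((1 / (2 * √(‖x‖ ^ 2))) • 2 • innerSL ℝ x) := by
    ext v
    simp [this, smul_smul]
    ring
  rw [e]; exact h2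

lemma gradPhi_eq (k : ℝ) (x y : EuclideanSpace ℝ (Fin 3)) (h : x - y ≠ 0) :
    gradPhi k x y = fun i =>
      Complex.exp (Complex.I * k * ‖x - y‖) * (Complex.I * k * ‖x - y‖ - 1) /
        (4 * Real.pi * (‖x - y‖ : ℂ) ^ 3) * ((x - y) i : ℝ) := by
  have hr : (0 : ℝ) < ‖x - y‖ := norm_pos_iff.mpr h
  set r : ℝ := ‖x - y‖ with hrdef
  have hg : HasFDerivAt (fun w : EuclideanSpace ℝ (Fin 3) => ‖w - y‖)
      ((r⁻¹ • innerSL ℝ (x - y))) x := by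
    have h' := (hasFDerivAt_norm3 (x - y) h).comp x ((hasFDerivAt_id x).sub_const y)
    rw [← hrdef] at h'
    exact h'
  have hco : HasDerivAt (fun t : ℝ => (t : ℂ)) 1 r := Complex.ofRealCLM.hasDerivAt
  have hnum : HasDerivAt (fun t : ℝ => Complex.exp (Complex.I * k * t))
      (Complex.exp (Complex.I * k * r) * (Complex.I * k)) r := by
    simpa [mul_assoc] using ((hco.const_mul (Complex.I * k)).cexp)
  have hden : HasDerivAt (fun t : ℝ => ((4 : ℂ) * Real.pi * t)) (4 * Real.pi) r := by
    simpa using hco.const_mul ((4 : ℂ) * Real.pi)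
  have hden0 : ((4 : ℂ) * Real.pi * r) ≠ 0 := by
    simp [Real.pi_ne_zero, hr.ne']
  have hF : HasDerivAt (fun t : ℝ => Complex.exp (Complex.I * k * t) / (4 * Real.pi * t))
      ((Complex.exp (Complex.I * k * r) * (Complex.I * k) * (4 * Real.pi * r) -
        Complex.exp (Complex.I * k * r) * (4 * Real.pi)) / (4 * Real.pi * r) ^ 2) r :=
    hnum.div hden hden0
  have hP : HasFDerivAt (fun w => Phi k w y)
      ((ContinuousLinearMap.smulRight (1 : ℝ →L[ℝ] ℝ)
        ((Complex.exp (Complex.I * k * r) * (Complex.I * k) * (4 * Real.pi * r) -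
          Complex.exp (Complex.I * k * r) * (4 * Real.pi)) / (4 * Real.pi * r) ^ 2)).comp
        (r⁻¹ • innerSL ℝ (x - y))) x := by
    have := hF.hasFDerivAt.comp x hg; exact this
  funext i
  show fderiv ℝ (fun w => Phi k w y) x (EuclideanSpace.single i 1) = _
  rw [hP.fderiv]
  have hinner : (innerSL ℝ (x - y)) (EuclideanSpace.single i 1) = (x - y) i := by
    simp [EuclideanSpace.inner_single_right, real_inner_comm]
  simp only [ContinuousLinearMap.coe_comp', Function.comp_apply,
    ContinuousLinearMap.coe_smul', Pi.smul_apply, hinner,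
    ContinuousLinearMap.smulRight_apply, ContinuousLinearMap.one_apply,
    smul_eq_mul, Complex.real_smul]
  have hrC : ((r : ℂ)) ≠ 0 := Complex.ofReal_ne_zero.mpr hr.ne'
  have hπ : ((Real.pi : ℂ)) ≠ 0 := Complex.ofReal_ne_zero.mpr Real.pi_ne_zero
  push_cast
  field_simp

lemma cross_norm_le (v q : Fin 3 → ℂ) {ε Q : ℝ} (hε : 0 ≤ ε) (hQ : 0 ≤ Q)
    (hv : ∀ i, ‖v i‖ ≤ ε) (hq : ∀ i, ‖q i‖ ≤ Q) :
    ‖crossProduct v q‖ ≤ 2 * (ε * Q) := by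
  have hb : ∀ a b c d : ℂ, ‖a‖ ≤ ε → ‖b‖ ≤ Q → ‖c‖ ≤ ε → ‖d‖ ≤ Q →
      ‖a * b - c * d‖ ≤ 2 * (ε * Q) := by
    intro a b c d ha hbb hc hd
    calc ‖a * b - c * d‖ ≤ ‖a * b‖ + ‖c * d‖ := norm_sub_le _ _
      _ = ‖a‖ * ‖b‖ + ‖c‖ * ‖d‖ := by rw [norm_mul, norm_mul]
      _ ≤ ε * Q + ε * Q := by gcongr
      _ = 2 * (ε * Q) := by ring
  apply pi_norm_le_iff_of_nonneg (by positivity) |>.mpr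
  intro i
  fin_cases i <;> simp only [cross_apply, Matrix.cons_val_zero, Matrix.cons_val_one,
    Matrix.head_cons, Matrix.cons_val_two, Matrix.tail_cons] <;>
    exact hb _ _ _ _ (hv _) (hq _) (hv _) (hq _)


set_option maxHeartbeats 1000000

/-- Magnetic-field half of Lemma 2.1: as `|z| → ∞`, uniformly for `x, y` in a bounded set,
`∇_x Φ_k(x+z, y) × p = (e^{ik|z| − ik ẑ·y}/(4π|z|)) · ik e^{ik x·ẑ} (ẑ × p) + O(|z|^{−2})`. -/
theorem magnetic_dipole_asymptotics (k : ℝ) (hk : 0 < k) (p : EuclideanSpace ℝ (Fin 3)) :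
    ∀ M : ℝ, 0 < M → ∃ C R : ℝ, 0 < C ∧ 0 < R ∧
      ∀ x y z : EuclideanSpace ℝ (Fin 3), ‖x‖ ≤ M → ‖y‖ ≤ M → R ≤ ‖z‖ →
        ‖crossProduct (gradPhi k (x + z) y) (toC p) -
            (Complex.exp (Complex.I * k * ‖z‖ - Complex.I * k * (inner ℝ ((‖z‖)⁻¹ • z) y : ℝ))
                / (4 * Real.pi * ‖z‖)) •
              ((Complex.I * k * Complex.exp (Complex.I * k * (inner ℝ x ((‖z‖)⁻¹ • z) : ℝ))) •
                crossProduct (toC ((‖z‖)⁻¹ • z)) (toC p))‖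
          ≤ C / ‖z‖ ^ 2 := by
  intro M hM
  have hπ : (0 : ℝ) < Real.pi := Real.pi_pos
  refine ⟨2 * ((4 + k * (24 * M + 16 * M ^ 2) + 4 * k ^ 2 * M ^ 2) / (4 * Real.pi)) * ‖p‖ + 1,
    max 1 (4 * M), by positivity, lt_of_lt_of_le one_pos (le_max_left _ _), ?_⟩
  intro x y z hx hy hz
  obtain ⟨s, hsdef⟩ : ∃ t : ℝ, ‖z‖ = t := ⟨_, rfl⟩
  rw [hsdef] at hz ⊢
  have hs1 : (1 : ℝ) ≤ s := le_trans (le_max_left _ _) hz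
  have hs4 : 4 * M ≤ s := le_trans (le_max_right _ _) hz
  have hs0 : (0 : ℝ) < s := lt_of_lt_of_le one_pos hs1
  obtain ⟨w, hwdef⟩ : ∃ w' : EuclideanSpace ℝ (Fin 3), x - y = w' := ⟨_, rfl⟩
  have hwn : ‖w‖ ≤ 2 * M := by
    rw [← hwdef]
    calc ‖x - y‖ ≤ ‖x‖ + ‖y‖ := norm_sub_le x y
      _ ≤ 2 * M := by linarith
  have huzw : x + z - y = z + w := by rw [← hwdef]; abel
  obtain ⟨r, hrdef⟩ : ∃ r' : ℝ, ‖x + z - y‖ = r' := ⟨_, rfl⟩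
  obtain ⟨a, hadef⟩ : ∃ a' : ℝ, (inner ℝ z w : ℝ) = a' := ⟨_, rfl⟩
  have hr2 : r ^ 2 = s ^ 2 + 2 * a + ‖w‖ ^ 2 := by
    rw [← hrdef, ← hsdef, ← hadef, huzw]; exact norm_add_sq_real z w
  have hsr : s ≤ r + ‖w‖ := by
    rw [← hsdef, ← hrdef, huzw]
    calc ‖z‖ = ‖(z + w) - w‖ := by rw [add_sub_cancel_right]
      _ ≤ ‖z + w‖ + ‖w‖ := norm_sub_le _ _
  have hrlow : s / 2 ≤ r := by linarith
  have hrpos : (0 : ℝ) < r := by linarith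
  have hne : x + z - y ≠ 0 := by
    have h0 : (0 : ℝ) < ‖x + z - y‖ := by rw [hrdef]; exact hrpos
    exact norm_pos_iff.mp h0
  have hCS : |a| ≤ s * ‖w‖ := by
    rw [← hadef, ← hsdef]; exact abs_real_inner_le_norm z w
  have haB : |a| ≤ 2 * M * s := by
    calc |a| ≤ s * ‖w‖ := hCS
      _ ≤ s * (2 * M) := by gcongr
      _ = 2 * M * s := by ring
  obtain ⟨haL, haR⟩ := abs_le.mp haB
  obtain ⟨φ, hφdef⟩ : ∃ t : ℝ, s + a / s = t := ⟨_, rfl⟩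
  have hdivaL : -(2 * M) ≤ a / s := by
    rw [le_div_iff₀ hs0]; linarith
  have hdivaR : a / s ≤ 2 * M := by
    rw [div_le_iff₀ hs0]; linarith
  have hφlow : s / 2 ≤ φ := by rw [← hφdef]; linarith
  have hφpos : (0 : ℝ) < φ := lt_of_lt_of_le (half_pos hs0) hφlow
  have hφ2 : φ ^ 2 = s ^ 2 + 2 * a + (a / s) ^ 2 := by
    rw [← hφdef]
    have h1 : s * (a / s) = a := by field_simp
    calc (s + a / s) ^ 2 = s ^ 2 + 2 * (s * (a / s)) + (a / s) ^ 2 := by ring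
      _ = s ^ 2 + 2 * a + (a / s) ^ 2 := by rw [h1]
  have hsq : (a / s) ^ 2 ≤ ‖w‖ ^ 2 := by
    rw [div_pow, div_le_iff₀ (by positivity)]
    calc a ^ 2 = |a| ^ 2 := (sq_abs a).symm
      _ ≤ (s * ‖w‖) ^ 2 := by gcongr
      _ = ‖w‖ ^ 2 * s ^ 2 := by ring
  have hr2φ2 : r ^ 2 - φ ^ 2 = ‖w‖ ^ 2 - (a / s) ^ 2 := by
    rw [hr2, hφ2]; ring
  have hφler : φ ≤ r := by
    have h1 : φ ^ 2 ≤ r ^ 2 := by linarith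
    have h2 := Real.sqrt_le_sqrt h1
    rwa [Real.sqrt_sq hφpos.le, Real.sqrt_sq hrpos.le] at h2
  have hw2 : ‖w‖ ^ 2 ≤ 4 * M ^ 2 := by
    have h1 : ‖w‖ * ‖w‖ ≤ (2 * M) * (2 * M) :=
      mul_le_mul hwn hwn (norm_nonneg w) (by linarith)
    calc ‖w‖ ^ 2 = ‖w‖ * ‖w‖ := sq ‖w‖
      _ ≤ (2 * M) * (2 * M) := h1
      _ = 4 * M ^ 2 := by ring
  have hrφ : r - φ ≤ 4 * M ^ 2 / s := by
    rw [le_div_iff₀ hs0]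
    have hstep : (r - φ) * s ≤ (r - φ) * (r + φ) :=
      mul_le_mul_of_nonneg_left (by linarith) (by linarith)
    have hident : (r - φ) * (r + φ) = r ^ 2 - φ ^ 2 := by ring
    linarith [hstep, hident, hr2φ2, hw2, sq_nonneg (a / s)]
  have habs_rφ : |r - φ| ≤ 4 * M ^ 2 / s := by
    rw [abs_of_nonneg (by linarith)]; exact hrφ
  have hir : (r ^ 2)⁻¹ ≤ 4 / s ^ 2 := by
    have h0 : (0 : ℝ) ≤ (r - s / 2) * (r + s / 2) := mul_nonneg (by linarith) (by linarith)
    have hid0 : (r - s / 2) * (r + s / 2) = r ^ 2 - s ^ 2 / 4 := by ring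
    have h1 : s ^ 2 / 4 ≤ r ^ 2 := by linarith
    have h2 : (r ^ 2)⁻¹ ≤ (s ^ 2 / 4)⁻¹ := inv_anti₀ (by positivity) h1
    rwa [show (s ^ 2 / 4)⁻¹ = 4 / s ^ 2 by field_simp] at h2
  -- complex abbreviations
  obtain ⟨er, herdef⟩ : ∃ e : ℂ, Complex.exp (Complex.I * ((k * r : ℝ) : ℂ)) = e := ⟨_, rfl⟩
  obtain ⟨eφ, heφdef⟩ : ∃ e : ℂ, Complex.exp (Complex.I * ((k * φ : ℝ) : ℂ)) = e := ⟨_, rfl⟩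
  obtain ⟨cc, hccdef⟩ : ∃ c : ℂ, Complex.I * k * eφ / (4 * Real.pi * s) = c := ⟨_, rfl⟩
  have hsC : ((s : ℂ)) ≠ 0 := Complex.ofReal_ne_zero.mpr hs0.ne'
  have hrC : ((r : ℂ)) ≠ 0 := Complex.ofReal_ne_zero.mpr hrpos.ne'
  have hπC : ((Real.pi : ℂ)) ≠ 0 := Complex.ofReal_ne_zero.mpr Real.pi_ne_zero
  have hnorm_er : ‖er‖ = 1 := by rw [← herdef]; exact norm_exp_I_mul (k * r)
  have hexp_diff : ‖er - eφ‖ ≤ k * (4 * M ^ 2 / s) := by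
    rw [← herdef, ← heφdef]
    calc ‖Complex.exp (Complex.I * ((k * r : ℝ) : ℂ)) - Complex.exp (Complex.I * ((k * φ : ℝ) : ℂ))‖
        ≤ |k * r - k * φ| := norm_exp_I_sub (k * r) (k * φ)
      _ = k * |r - φ| := by rw [← mul_sub, abs_mul, abs_of_pos hk]
      _ ≤ k * (4 * M ^ 2 / s) := by gcongr
  -- scalar combination equals cc
  have hc : (Complex.exp (Complex.I * k * s - Complex.I * k * ((inner ℝ ((s)⁻¹ • z) y : ℝ)))
        / (4 * Real.pi * s)) * (Complex.I * k *
        Complex.exp (Complex.I * k * ((inner ℝ x ((s)⁻¹ • z) : ℝ)))) = cc := by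
    have e1 : (inner ℝ ((s)⁻¹ • z) y : ℝ) = s⁻¹ * (inner ℝ z y : ℝ) := real_inner_smul_left z y s⁻¹
    have e2 : (inner ℝ x ((s)⁻¹ • z) : ℝ) = s⁻¹ * (inner ℝ z x : ℝ) := by
      rw [real_inner_smul_right, real_inner_comm]
    have e3 : (inner ℝ z x : ℝ) - (inner ℝ z y : ℝ) = a := by
      rw [← hadef, ← hwdef, inner_sub_right]
    have hsum : (Complex.I * k * s - Complex.I * k * ((s⁻¹ * (inner ℝ z y : ℝ) : ℝ) : ℂ))
        + Complex.I * k * ((s⁻¹ * (inner ℝ z x : ℝ) : ℝ) : ℂ) = Complex.I * ((k * φ : ℝ) : ℂ) := by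
      rw [← hφdef, ← e3]; push_cast; field_simp; ring
    rw [← hccdef, ← heφdef, e1, e2]
    calc Complex.exp (Complex.I * k * s - Complex.I * k * ((s⁻¹ * (inner ℝ z y : ℝ) : ℝ) : ℂ))
          / (4 * Real.pi * s) * (Complex.I * k *
          Complex.exp (Complex.I * k * ((s⁻¹ * (inner ℝ z x : ℝ) : ℝ) : ℂ)))
        = Complex.I * k * (Complex.exp (Complex.I * k * s
            - Complex.I * k * ((s⁻¹ * (inner ℝ z y : ℝ) : ℝ) : ℂ)) *
          Complex.exp (Complex.I * k * ((s⁻¹ * (inner ℝ z x : ℝ) : ℝ) : ℂ))) / (4 * Real.pi * s) := by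
          ring
      _ = Complex.I * k * Complex.exp ((Complex.I * k * s
            - Complex.I * k * ((s⁻¹ * (inner ℝ z y : ℝ) : ℝ) : ℂ))
            + Complex.I * k * ((s⁻¹ * (inner ℝ z x : ℝ) : ℝ) : ℂ)) / (4 * Real.pi * s) := by
          rw [← Complex.exp_add]
      _ = Complex.I * k * Complex.exp (Complex.I * ((k * φ : ℝ) : ℂ)) / (4 * Real.pi * s) := by
          rw [hsum]
  -- component bound
  have hcomp : ∀ i : Fin 3, ‖gradPhi k (x + z) y i -
      cc * (((s⁻¹ • z : EuclideanSpace ℝ (Fin 3)) i : ℝ) : ℂ)‖ ≤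
      ((4 + k * (24 * M + 16 * M ^ 2) + 4 * k ^ 2 * M ^ 2) / (4 * Real.pi)) / s ^ 2 := by
    intro i
    simp only [gradPhi_eq k (x + z) y hne]
    rw [hrdef]
    have hzi : ((s⁻¹ • z : EuclideanSpace ℝ (Fin 3)) i : ℝ) = s⁻¹ * z i := rfl
    obtain ⟨ui, huid⟩ : ∃ t : ℝ, (x + z - y) i = t := ⟨_, rfl⟩
    obtain ⟨zi, hzid⟩ : ∃ t : ℝ, z i = t := ⟨_, rfl⟩
    rw [hzi, hzid, huid]
    have hui : ui = zi + w i := by rw [← huid, ← hzid, huzw]; rfl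
    have huir : |ui| ≤ r := by rw [← huid, ← hrdef]; exact coord_le_norm _ i
    have hziB : |zi| ≤ s := by rw [← hzid, ← hsdef]; exact coord_le_norm z i
    have hexpeq : Complex.exp (Complex.I * k * (r : ℂ)) = er := by
      rw [← herdef]; congr 1; push_cast; ring
    have hid : Complex.exp (Complex.I * k * (r : ℂ)) * (Complex.I * k * (r : ℂ) - 1) /
          (4 * Real.pi * ((r : ℝ) : ℂ) ^ 3) * ((ui : ℝ) : ℂ)
          - cc * ((s⁻¹ * zi : ℝ) : ℂ) =
        -(er * ((ui / (4 * Real.pi * r ^ 3) : ℝ) : ℂ))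
        + Complex.I * (er * ((k / (4 * Real.pi) * (ui * r / r ^ 3 - zi / s ^ 2) : ℝ) : ℂ))
        + Complex.I * ((er - eφ) * ((k * zi / (4 * Real.pi * s ^ 2) : ℝ) : ℂ)) := by
      rw [hexpeq, ← hccdef]
      push_cast
      ring
    rw [hid]
    have hb1 : ‖-(er * ((ui / (4 * Real.pi * r ^ 3) : ℝ) : ℂ))‖ ≤ (4 / (4 * Real.pi)) / s ^ 2 := by
      rw [norm_neg, norm_mul, hnorm_er, one_mul, Complex.norm_real, Real.norm_eq_abs]
      rw [abs_div, abs_of_nonneg (by positivity : (0:ℝ) ≤ 4 * Real.pi * r ^ 3)]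
      calc |ui| / (4 * Real.pi * r ^ 3) ≤ r / (4 * Real.pi * r ^ 3) := by gcongr
        _ = (1 / (4 * Real.pi)) * (r ^ 2)⁻¹ := by field_simp
        _ ≤ (1 / (4 * Real.pi)) * (4 / s ^ 2) := by gcongr
        _ = (4 / (4 * Real.pi)) / s ^ 2 := by ring
    have hb2 : ‖Complex.I * (er * ((k / (4 * Real.pi) * (ui * r / r ^ 3 - zi / s ^ 2) : ℝ) : ℂ))‖
        ≤ (k * (24 * M + 16 * M ^ 2) / (4 * Real.pi)) / s ^ 2 := by
      rw [norm_mul, Complex.norm_I, one_mul, norm_mul, hnorm_er, one_mul,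
        Complex.norm_real, Real.norm_eq_abs, abs_mul]
      have hconv : ui * r / r ^ 3 = ui / r ^ 2 := by
        rw [pow_succ]
        exact mul_div_mul_right _ _ hrpos.ne'
      rw [hconv]
      have hdd : |ui / r ^ 2 - zi / s ^ 2| ≤ (24 * M + 16 * M ^ 2) / s ^ 2 := by
        have hwiB : |w i| ≤ 2 * M := (coord_le_norm w i).trans hwn
        have hs2r2 : |s ^ 2 - r ^ 2| ≤ (4 * M + 4 * M ^ 2) * s := by
          have heq2 : s ^ 2 - r ^ 2 = -(2 * a) - ‖w‖ ^ 2 := by linarith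
          have h4Ms : 4 * M ^ 2 ≤ 4 * M ^ 2 * s := le_mul_of_one_le_right (by positivity) hs1
          have hwpos : (0:ℝ) ≤ 4 * M ^ 2 * s := by positivity
          rw [heq2, abs_le]
          constructor <;> linarith [sq_nonneg (‖w‖)]
        have hkey : ui / r ^ 2 - zi / s ^ 2
            = w i / r ^ 2 + zi * ((s ^ 2 - r ^ 2) / (r ^ 2 * s ^ 2)) := by
          rw [hui]; field_simp; ring
        rw [hkey]
        have ht1 : |w i / r ^ 2| ≤ 8 * M / s ^ 2 := by
          rw [abs_div, abs_of_nonneg (sq_nonneg r), div_eq_mul_inv]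
          calc |w i| * (r ^ 2)⁻¹ ≤ (2 * M) * (4 / s ^ 2) :=
            mul_le_mul hwiB hir (by positivity) (by positivity)
            _ = 8 * M / s ^ 2 := by ring
        have ht2 : |zi * ((s ^ 2 - r ^ 2) / (r ^ 2 * s ^ 2))| ≤ (16 * M + 16 * M ^ 2) / s ^ 2 := by
          rw [abs_mul, abs_div, abs_of_nonneg (by positivity : (0:ℝ) ≤ r ^ 2 * s ^ 2)]
          calc |zi| * (|s ^ 2 - r ^ 2| / (r ^ 2 * s ^ 2))
              ≤ s * (((4 * M + 4 * M ^ 2) * s) / (r ^ 2 * s ^ 2)) := by gcongr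
            _ = (4 * M + 4 * M ^ 2) * (r ^ 2)⁻¹ := by field_simp
            _ ≤ (4 * M + 4 * M ^ 2) * (4 / s ^ 2) := by gcongr
            _ = (16 * M + 16 * M ^ 2) / s ^ 2 := by ring
        calc |w i / r ^ 2 + zi * ((s ^ 2 - r ^ 2) / (r ^ 2 * s ^ 2))|
            ≤ |w i / r ^ 2| + |zi * ((s ^ 2 - r ^ 2) / (r ^ 2 * s ^ 2))| := abs_add_le _ _
          _ ≤ 8 * M / s ^ 2 + (16 * M + 16 * M ^ 2) / s ^ 2 := add_le_add ht1 ht2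
          _ = (24 * M + 16 * M ^ 2) / s ^ 2 := by ring
      calc |k / (4 * Real.pi)| * |ui / r ^ 2 - zi / s ^ 2|
          ≤ (k / (4 * Real.pi)) * ((24 * M + 16 * M ^ 2) / s ^ 2) := by
            rw [abs_of_pos (by positivity : (0:ℝ) < k / (4 * Real.pi))]
            gcongr
        _ = (k * (24 * M + 16 * M ^ 2) / (4 * Real.pi)) / s ^ 2 := by ring
    have hb3 : ‖Complex.I * ((er - eφ) * ((k * zi / (4 * Real.pi * s ^ 2) : ℝ) : ℂ))‖
        ≤ (4 * k ^ 2 * M ^ 2 / (4 * Real.pi)) / s ^ 2 := by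
      rw [norm_mul, Complex.norm_I, one_mul, norm_mul, Complex.norm_real, Real.norm_eq_abs]
      have h1 : |k * zi / (4 * Real.pi * s ^ 2)| = k * |zi| / (4 * Real.pi * s ^ 2) := by
        rw [abs_div, abs_mul, abs_of_pos hk,
          abs_of_nonneg (by positivity : (0:ℝ) ≤ 4 * Real.pi * s ^ 2)]
      rw [h1]
      calc ‖er - eφ‖ * (k * |zi| / (4 * Real.pi * s ^ 2))
          ≤ (k * (4 * M ^ 2 / s)) * (k * s / (4 * Real.pi * s ^ 2)) := by
            apply mul_le_mul hexp_diff (by gcongr) (by positivity) (by positivity)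
        _ = (4 * k ^ 2 * M ^ 2 / (4 * Real.pi)) / s ^ 2 := by field_simp
    calc ‖-(er * ((ui / (4 * Real.pi * r ^ 3) : ℝ) : ℂ))
          + Complex.I * (er * ((k / (4 * Real.pi) * (ui * r / r ^ 3 - zi / s ^ 2) : ℝ) : ℂ))
          + Complex.I * ((er - eφ) * ((k * zi / (4 * Real.pi * s ^ 2) : ℝ) : ℂ))‖
        ≤ ‖-(er * ((ui / (4 * Real.pi * r ^ 3) : ℝ) : ℂ))‖
          + ‖Complex.I * (er * ((k / (4 * Real.pi) * (ui * r / r ^ 3 - zi / s ^ 2) : ℝ) : ℂ))‖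
          + ‖Complex.I * ((er - eφ) * ((k * zi / (4 * Real.pi * s ^ 2) : ℝ) : ℂ))‖ :=
          norm_add₃_le
      _ ≤ (4 / (4 * Real.pi)) / s ^ 2 + (k * (24 * M + 16 * M ^ 2) / (4 * Real.pi)) / s ^ 2
          + (4 * k ^ 2 * M ^ 2 / (4 * Real.pi)) / s ^ 2 :=
          add_le_add (add_le_add hb1 hb2) hb3
      _ = ((4 + k * (24 * M + 16 * M ^ 2) + 4 * k ^ 2 * M ^ 2) / (4 * Real.pi)) / s ^ 2 := by
          ring
  -- rewrite the right-hand side as a single cross product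
  have hRHS : (Complex.exp (Complex.I * k * s - Complex.I * k * ((inner ℝ ((s)⁻¹ • z) y : ℝ)))
        / (4 * Real.pi * s)) •
      ((Complex.I * k * Complex.exp (Complex.I * k * ((inner ℝ x ((s)⁻¹ • z) : ℝ)))) •
        (crossProduct (toC ((s)⁻¹ • z))) (toC p)) =
      (crossProduct (cc • toC ((s)⁻¹ • z))) (toC p) := by
    rw [smul_smul, ← LinearMap.smul_apply, ← _root_.map_smul, hc]
  rw [hRHS]
  have hsub : (crossProduct (gradPhi k (x + z) y)) (toC p)
      - (crossProduct (cc • toC ((s)⁻¹ • z))) (toC p)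
      = (crossProduct (gradPhi k (x + z) y - cc • toC ((s)⁻¹ • z))) (toC p) := by
    rw [_root_.map_sub, LinearMap.sub_apply]
  rw [hsub]
  have hq : ∀ i, ‖toC p i‖ ≤ ‖p‖ := fun i => by
    rw [show toC p i = ((p i : ℝ) : ℂ) from rfl, Complex.norm_real, Real.norm_eq_abs]
    exact coord_le_norm p i
  have hv : ∀ i, ‖(gradPhi k (x + z) y - cc • toC ((s)⁻¹ • z)) i‖ ≤
      ((4 + k * (24 * M + 16 * M ^ 2) + 4 * k ^ 2 * M ^ 2) / (4 * Real.pi)) / s ^ 2 := fun i => by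
    rw [Pi.sub_apply, Pi.smul_apply, smul_eq_mul]
    exact hcomp i
  calc ‖(crossProduct (gradPhi k (x + z) y - cc • toC ((s)⁻¹ • z))) (toC p)‖
      ≤ 2 * ((((4 + k * (24 * M + 16 * M ^ 2) + 4 * k ^ 2 * M ^ 2) / (4 * Real.pi)) / s ^ 2) * ‖p‖) :=
        cross_norm_le _ _ (by positivity) (norm_nonneg p) hv hq
    _ = (2 * ((4 + k * (24 * M + 16 * M ^ 2) + 4 * k ^ 2 * M ^ 2) / (4 * Real.pi)) * ‖p‖) / s ^ 2 := by
        ring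
    _ ≤ (2 * ((4 + k * (24 * M + 16 * M ^ 2) + 4 * k ^ 2 * M ^ 2) / (4 * Real.pi)) * ‖p‖ + 1) / s ^ 2 := by
        gcongr
        linarith
end
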